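/- Let M be a multiplicity-free R-module of finite length. Then the lattice of submodules of M is distributive: for all submodules A, B, C of M one has A ∩ (B + C) = (A ∩ B) + (A ∩ C). -/

import Mathlib

set_option linter.unusedSectionVars false
set_option maxHeartbeats 1000000

section LatticeAux
variable {α : Type*} [Lattice α] [IsModularLattice α] (a b c : α)

/-- Bottom of the diamond sublattice associated to a triple. -/
def dU : α := (a ⊓ b) ⊔ ((a ⊓ c) ⊔ (b ⊓ c))
/-- Top of the diamond sublattice associated to a triple. -/
def dV : α := (a ⊔ b) ⊓ ((a ⊔ c) ⊓ (b ⊔ c))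

lemma dU_le_dV : dU a b c ≤ dV a b c := by
  refine sup_le (le_inf inf_le_sup (le_inf ?_ ?_))
    (sup_le (le_inf ?_ (le_inf inf_le_sup ?_)) (le_inf ?_ (le_inf ?_ inf_le_sup))) <;>
  first
    | exact inf_le_left.trans le_sup_left
    | exact inf_le_left.trans le_sup_right
    | exact inf_le_right.trans le_sup_left
    | exact inf_le_right.trans le_sup_right

lemma dV_le_left : dV a b c ≤ a ⊔ b := inf_le_left
lemma dV_le_mid : dV a b c ≤ a ⊔ c := inf_le_right.trans inf_le_left
lemma dV_le_right : dV a b c ≤ b ⊔ c := inf_le_right.trans inf_le_right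

lemma dsup : (dU a b c ⊔ (a ⊓ dV a b c)) ⊔ (dU a b c ⊔ (b ⊓ dV a b c)) = dV a b c := by
  set u := dU a b c with hu
  set v := dV a b c with hv
  have huv : u ≤ v := dU_le_dV a b c
  have hx : u ⊔ (a ⊓ v) = (u ⊔ a) ⊓ v := (sup_inf_assoc_of_le a huv).symm
  refine le_antisymm (sup_le (sup_le huv inf_le_right) (sup_le huv inf_le_right)) ?_
  have key : v ≤ (u ⊔ (a ⊓ v)) ⊔ (b ⊓ v) := by
    rw [hx, sup_comm ((u ⊔ a) ⊓ v) (b ⊓ v), ← sup_inf_assoc_of_le (u ⊔ a) (inf_le_right : b ⊓ v ≤ v)]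
    refine le_inf ?_ le_rfl
    have h1 : b ⊓ (a ⊔ c) ≤ b ⊓ v := le_inf inf_le_left (le_inf
      (inf_le_left.trans le_sup_right) (le_inf inf_le_right (inf_le_left.trans le_sup_left)))
    calc v ≤ (a ⊔ b) ⊓ (a ⊔ c) := le_inf (dV_le_left a b c) (dV_le_mid a b c)
      _ = a ⊔ (b ⊓ (a ⊔ c)) := sup_inf_assoc_of_le b le_sup_left
      _ ≤ (b ⊓ v) ⊔ (u ⊔ a) := sup_le (le_sup_right.trans le_sup_right)
          (h1.trans le_sup_left)
  calc v ≤ (u ⊔ (a ⊓ v)) ⊔ (b ⊓ v) := key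
    _ ≤ (u ⊔ (a ⊓ v)) ⊔ (u ⊔ (b ⊓ v)) := sup_le le_sup_left (le_sup_right.trans le_sup_right)

lemma dinf : (dU a b c ⊔ (a ⊓ dV a b c)) ⊓ (dU a b c ⊔ (b ⊓ dV a b c)) = dU a b c := by
  set u := dU a b c with hu
  set v := dV a b c with hv
  have huv : u ≤ v := dU_le_dV a b c
  set x := u ⊔ (a ⊓ v) with hxdef
  have hux : u ≤ x := le_sup_left
  have h1 : x ⊓ (u ⊔ (b ⊓ v)) = u ⊔ ((b ⊓ v) ⊓ x) := by
    rw [inf_comm, sup_inf_assoc_of_le (b ⊓ v) hux]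
  rw [h1]
  refine sup_eq_left.mpr ?_
  have hxle : x ≤ (b ⊓ c) ⊔ a := sup_le
    (sup_le (inf_le_left.trans le_sup_right)
      (sup_le (inf_le_left.trans le_sup_right) le_sup_left)) (inf_le_left.trans le_sup_right)
  have hbv : b ⊓ v ≤ b ⊓ (a ⊔ c) := inf_le_inf_left b (dV_le_mid a b c)
  have hkey : ((b ⊓ c) ⊔ a) ⊓ (b ⊓ (a ⊔ c)) ≤ u := by
    rw [sup_inf_assoc_of_le a (le_inf inf_le_left (inf_le_right.trans le_sup_right))]
    exact sup_le (le_sup_right.trans le_sup_right)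
      (((le_inf inf_le_left (inf_le_right.trans inf_le_left)) :
          a ⊓ (b ⊓ (a ⊔ c)) ≤ a ⊓ b).trans le_sup_left)
  calc (b ⊓ v) ⊓ x ≤ (b ⊓ (a ⊔ c)) ⊓ ((b ⊓ c) ⊔ a) := inf_le_inf hbv hxle
    _ = ((b ⊓ c) ⊔ a) ⊓ (b ⊓ (a ⊔ c)) := inf_comm _ _
    _ ≤ u := hkey
end LatticeAux

section ModAux
variable {R M : Type*} [Ring R] [AddCommGroup M] [Module R M]

open JordanHolderLattice

lemma transfer_sup {X Y e : Submodule R M} (hc : X ⋖ Y) (he : Y ⊓ e ≤ X) :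
    ((X ⊔ e) ⋖ (Y ⊔ e)) ∧ Iso (X, Y) ((X ⊔ e), (Y ⊔ e)) := by
  have hmeet : Y ⊓ (X ⊔ e) = X := by
    rw [inf_comm, sup_inf_assoc_of_le e hc.le, sup_eq_left]
    exact le_trans (le_of_eq (inf_comm e Y)) he
  have hjoin : Y ⊔ (X ⊔ e) = Y ⊔ e := by
    rw [← sup_assoc, sup_eq_left.mpr hc.le]
  have hcov : (X ⊔ e) ⋖ (Y ⊔ e) := by
    have := IsUpperModularLattice.covBy_sup_of_inf_covBy (a := Y) (b := X ⊔ e)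
      (by rw [hmeet]; exact hc)
    rwa [hjoin] at this
  refine ⟨hcov, ?_⟩
  have h2 := second_iso (x := X ⊔ e) (y := Y)
    (by rw [sup_comm (X ⊔ e) Y, hjoin]; exact hcov)
  rw [sup_comm (X ⊔ e) Y, hjoin, inf_comm (X ⊔ e) Y, hmeet] at h2
  exact iso_symm h2

lemma transfer_inf {X Y e : Submodule R M} (hc : X ⋖ Y) (he : Y ≤ X ⊔ e) :
    ((X ⊓ e) ⋖ (Y ⊓ e)) ∧ Iso (X, Y) ((X ⊓ e), (Y ⊓ e)) := by
  have hjoin : X ⊔ (Y ⊓ e) = Y := by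
    rw [inf_comm Y e, ← sup_inf_assoc_of_le e hc.le, inf_comm, inf_eq_left.mpr he]
  have hmeet : X ⊓ (Y ⊓ e) = X ⊓ e := by
    rw [← inf_assoc, inf_eq_left.mpr hc.le]
  have hcov : (X ⊓ e) ⋖ (Y ⊓ e) := by
    have := IsLowerModularLattice.inf_covBy_of_covBy_sup (a := X) (b := Y ⊓ e)
      (by rw [hjoin]; exact hc)
    rwa [hmeet] at this
  refine ⟨hcov, ?_⟩
  have h2 := second_iso (x := X) (y := Y ⊓ e) (by rw [hjoin]; exact hc)
  rwa [hjoin, hmeet] at h2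

lemma exists_cs [IsNoetherian R M] [IsArtinian R M] (p : Submodule R M) :
    ∀ q : Submodule R M, p ≤ q →
      ∃ s : CompositionSeries (Submodule R M), s.head = p ∧ s.last = q := by
  intro q
  induction q using WellFoundedLT.induction with
  | ind q ih =>
    intro hpq
    rcases eq_or_lt_of_le hpq with rfl | hlt
    · exact ⟨RelSeries.singleton _ p, rfl, rfl⟩
    · have hS : Set.Nonempty {z : Submodule R M | p ≤ z ∧ z < q} := ⟨p, le_rfl, hlt⟩
      obtain ⟨x, ⟨hpx, hxq⟩, hmax⟩ :=
        (wellFounded_gt (α := Submodule R M)).has_min _ hS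
      have hcov : x ⋖ q := ⟨hxq, fun z hxz hzq => hmax z ⟨hpx.trans hxz.le, hzq⟩ hxz⟩
      obtain ⟨s, hs0, hs1⟩ := ih x hxq hpx
      refine ⟨s.snoc q (show JordanHolderLattice.IsMaximal s.last q by rw [hs1]; exact hcov),
        ?_, ?_⟩
      · rw [RelSeries.head_snoc, hs0]
      · rw [RelSeries.last_snoc]
end ModAux

/-- The `i`-th composition factor (as a module) of a composition series of submodules:
the quotient of `s i.succ` by `s i.castSucc`. -/
abbrev csFactor (R : Type*) [Ring R] {M : Type*} [AddCommGroup M] [Module R M]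
    (s : CompositionSeries (Submodule R M)) (i : Fin s.length) : Type _ :=
  ↥(s i.succ) ⧸ Submodule.comap (s i.succ).subtype (s i.castSucc)

/-- A composition series of the whole module: starts at `⊥` and ends at `⊤`. -/
def IsCompSeriesOf (R : Type*) [Ring R] {M : Type*} [AddCommGroup M] [Module R M]
    (s : CompositionSeries (Submodule R M)) : Prop :=
  s.head = ⊥ ∧ s.last = ⊤

/-- The multiplicity of `S` among the factors of the composition series `s`. -/
noncomputable def multS (R : Type*) [Ring R] {M : Type*} [AddCommGroup M] [Module R M]
    (S : Type*) [AddCommGroup S] [Module R S]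
    (s : CompositionSeries (Submodule R M)) : ℕ :=
  Nat.card {i : Fin s.length // Nonempty (csFactor R s i ≃ₗ[R] S)}

/-- A composition series is multiplicity-free if its factors are pairwise non-isomorphic. -/
def MultFree (R : Type*) [Ring R] {M : Type*} [AddCommGroup M] [Module R M]
    (s : CompositionSeries (Submodule R M)) : Prop :=
  ∀ i j : Fin s.length, Nonempty (csFactor R s i ≃ₗ[R] csFactor R s j) → i = j

theorem stmt5 {R M : Type*} [Ring R] [AddCommGroup M] [Module R M]
    (sM : CompositionSeries (Submodule R M)) (hsM : IsCompSeriesOf R sM)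
    (hmf : MultFree R sM)
    (A B C : Submodule R M) :
    A ⊓ (B ⊔ C) = (A ⊓ B) ⊔ (A ⊓ C) := by
  classical
  have hfl : IsFiniteLength R M :=
    isFiniteLength_of_exists_compositionSeries ⟨sM, hsM.1, hsM.2⟩
  obtain ⟨hN, hA⟩ := isFiniteLength_iff_isNoetherian_isArtinian.mp hfl
  refine le_antisymm ?_ (le_inf (sup_le inf_le_left inf_le_left)
    (sup_le (inf_le_right.trans le_sup_left) (inf_le_right.trans le_sup_right)))
  by_contra hne
  set u := dU A B C with hu
  set v := dV A B C with hv
  have huv : u ≤ v := dU_le_dV A B C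
  have hune : u ≠ v := by
    intro h
    apply hne
    have hAv : A ⊓ (B ⊔ C) = A ⊓ v := le_antisymm
      (le_inf inf_le_left (le_inf (inf_le_left.trans le_sup_left)
        (le_inf (inf_le_left.trans le_sup_left) inf_le_right)))
      (le_inf inf_le_left (inf_le_right.trans (dV_le_right A B C)))
    have hAu : A ⊓ u = (A ⊓ B) ⊔ (A ⊓ C) := by
      have h1 : u = ((A ⊓ B) ⊔ (A ⊓ C)) ⊔ (B ⊓ C) := by
        rw [hu]; unfold dU; rw [sup_assoc]
      rw [h1, inf_comm, sup_inf_assoc_of_le (B ⊓ C) (sup_le inf_le_left inf_le_left)]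
      exact sup_eq_left.mpr
        ((le_inf inf_le_right (inf_le_left.trans inf_le_left) :
          (B ⊓ C) ⊓ A ≤ A ⊓ B).trans le_sup_left)
    rw [hAv, ← h, hAu]
  have hlt : u < v := huv.lt_of_ne hune
  set a₁ := u ⊔ (A ⊓ v) with ha₁
  set b₁ := u ⊔ (B ⊓ v) with hb₁
  set c₁ := u ⊔ (C ⊓ v) with hc₁
  have hab_s : a₁ ⊔ b₁ = v := dsup A B C
  have hab_i : a₁ ⊓ b₁ = u := dinf A B C
  have hUbca : dU B C A = u := by rw [hu]; unfold dU; ac_rfl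
  have hVbca : dV B C A = v := by rw [hv]; unfold dV; ac_rfl
  have hbc_s : b₁ ⊔ c₁ = v := by have := dsup B C A; rwa [hUbca, hVbca] at this
  have hbc_i : b₁ ⊓ c₁ = u := by have := dinf B C A; rwa [hUbca, hVbca] at this
  have hUcab : dU C A B = u := by rw [hu]; unfold dU; ac_rfl
  have hVcab : dV C A B = v := by rw [hv]; unfold dV; ac_rfl
  have hca_s : c₁ ⊔ a₁ = v := by have := dsup C A B; rwa [hUcab, hVcab] at this
  have hca_i : c₁ ⊓ a₁ = u := by have := dinf C A B; rwa [hUcab, hVcab] at this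
  have hua : u ≤ a₁ := le_sup_left
  have hub : u ≤ b₁ := le_sup_left
  have huc : u ≤ c₁ := le_sup_left
  have hav : a₁ ≤ v := le_sup_left.trans hab_s.le
  have hbv : b₁ ≤ v := le_sup_right.trans hab_s.le
  have hcv : c₁ ≤ v := le_sup_left.trans hca_s.le
  have hu_lt_a : u < a₁ := by
    refine hua.lt_of_ne fun h => ?_
    have h1 : b₁ = v := by rw [← hab_s, ← h, sup_eq_right.mpr hub]
    have h2 : c₁ = u := by rw [← hbc_i, h1, inf_eq_right.mpr hcv]
    apply hune
    rw [← hca_s, h2, ← h, sup_idem]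
  -- the transfer map φ s = ((s ⊔ c₁) ⊓ b₁) ⊔ a₁ sends covers in [u, a₁] to covers in [a₁, v]
  have key : ∀ X Y : Submodule R M, u ≤ X → Y ≤ a₁ → X ⋖ Y →
      ((((X ⊔ c₁) ⊓ b₁) ⊔ a₁) ⋖ (((Y ⊔ c₁) ⊓ b₁) ⊔ a₁)) ∧
      JordanHolderLattice.Iso (X, Y) ((((X ⊔ c₁) ⊓ b₁) ⊔ a₁), (((Y ⊔ c₁) ⊓ b₁) ⊔ a₁)) := by
    intro X Y hX hY hc
    have s1 := transfer_sup (e := c₁) hc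
      (((inf_le_inf_right c₁ hY).trans (inf_comm a₁ c₁ ▸ hca_i.le)).trans hX)
    have s2 := transfer_inf (e := b₁) s1.1
      (by
        calc Y ⊔ c₁ ≤ v := sup_le (hY.trans hav) hcv
          _ = b₁ ⊔ c₁ := hbc_s.symm
          _ ≤ (X ⊔ c₁) ⊔ b₁ := sup_le le_sup_right (le_sup_right.trans le_sup_left))
    have s3 := transfer_sup (e := a₁) s2.1
      (by
        calc ((Y ⊔ c₁) ⊓ b₁) ⊓ a₁ ≤ b₁ ⊓ a₁ := inf_le_inf_right a₁ inf_le_right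
          _ = u := by rw [inf_comm, hab_i]
          _ ≤ (X ⊔ c₁) ⊓ b₁ := le_inf (hX.trans le_sup_left) hub)
    exact ⟨s3.1, JordanHolderLattice.iso_trans s1.2 (JordanHolderLattice.iso_trans s2.2 s3.2)⟩
  have hφu : ((u ⊔ c₁) ⊓ b₁) ⊔ a₁ = a₁ := by
    rw [sup_eq_right.mpr huc, inf_comm c₁ b₁, hbc_i, sup_eq_right.mpr hua]
  have hφa : ((a₁ ⊔ c₁) ⊓ b₁) ⊔ a₁ = v := by
    rw [sup_comm a₁ c₁, hca_s, inf_eq_right.mpr hbv, sup_comm b₁ a₁, hab_s]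
  -- assemble a composition series of M through u, a₁ and v
  obtain ⟨s0, hs00, hs01⟩ := exists_cs ⊥ u bot_le
  obtain ⟨t, ht0, ht1⟩ := exists_cs u a₁ hu_lt_a.le
  obtain ⟨s3, hs30, hs31⟩ := exists_cs v ⊤ le_top
  have htlen : 0 < t.length := by
    rcases Nat.eq_zero_or_pos t.length with h0 | h
    · exfalso
      apply hu_lt_a.ne
      rw [← ht0, ← ht1]
      show t.toFun 0 = t.toFun (Fin.last _)
      congr 1
      ext
      simp [h0]
    · exact h
  let t' : CompositionSeries (Submodule R M) :=
    { length := t.length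
      toFun := fun i => ((t.toFun i ⊔ c₁) ⊓ b₁) ⊔ a₁
      step := fun i => (key _ _ (by rw [← ht0]; exact t.head_le _)
        (by rw [← ht1]; exact CompositionSeries.le_last _) (t.step i)).1 }
  have ht'0 : t'.head = a₁ := by
    show ((t.toFun 0 ⊔ c₁) ⊓ b₁) ⊔ a₁ = a₁
    rw [show t.toFun 0 = u from ht0, hφu]
  have ht'1 : t'.last = v := by
    show ((t.toFun (Fin.last _) ⊔ c₁) ⊓ b₁) ⊔ a₁ = v
    rw [show t.toFun (Fin.last _) = a₁ from ht1, hφa]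
  have h23 : t'.last = s3.head := by rw [ht'1, hs30]
  have h12 : t.last = (RelSeries.smash t' s3 h23).head := by
    rw [RelSeries.head_smash, ht'0, ht1]
  have h01 : s0.last = (RelSeries.smash t (RelSeries.smash t' s3 h23) h12).head := by
    rw [RelSeries.head_smash, hs01, ht0]
  obtain ⟨f, hf⟩ := CompositionSeries.jordan_holder
    (RelSeries.smash s0 (RelSeries.smash t (RelSeries.smash t' s3 h23) h12) h01) sM
    (by rw [RelSeries.head_smash, hs00, hsM.1])
    (by rw [RelSeries.last_smash, RelSeries.last_smash, RelSeries.last_smash, hs31, hsM.2])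
  -- the two isomorphic steps
  have hiso := (key (t.toFun (Fin.castSucc ⟨0, htlen⟩)) (t.toFun (Fin.succ ⟨0, htlen⟩))
    (by rw [← ht0]; exact t.head_le _) (by rw [← ht1]; exact CompositionSeries.le_last _)
    (t.step ⟨0, htlen⟩)).2
  have hf1 := hf (Fin.natAdd s0.length
    (Fin.castAdd (RelSeries.smash t' s3 h23).length ⟨0, htlen⟩))
  erw [RelSeries.smash_natAdd, RelSeries.smash_succ_natAdd,
    RelSeries.smash_castAdd, RelSeries.smash_succ_castAdd] at hf1
  have hf2 := hf (Fin.natAdd s0.length (Fin.natAdd t.length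
    (Fin.castAdd s3.length (⟨0, htlen⟩ : Fin t'.length))))
  erw [RelSeries.smash_natAdd, RelSeries.smash_succ_natAdd,
    RelSeries.smash_natAdd, RelSeries.smash_succ_natAdd,
    RelSeries.smash_castAdd, RelSeries.smash_succ_castAdd] at hf2
  have hstep2 : JordanHolderLattice.Iso (t.toFun (Fin.castSucc ⟨0, htlen⟩), t.toFun (Fin.succ ⟨0, htlen⟩))
      (t'.toFun (Fin.castSucc ⟨0, htlen⟩), t'.toFun (Fin.succ ⟨0, htlen⟩)) := hiso
  have hfin : (f (Fin.natAdd s0.length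
        (Fin.castAdd (RelSeries.smash t' s3 h23).length ⟨0, htlen⟩))) =
      (f (Fin.natAdd s0.length (Fin.natAdd t.length
        (Fin.castAdd s3.length (⟨0, htlen⟩ : Fin t'.length))))) := by
    apply hmf
    exact ⟨(JordanHolderLattice.iso_trans (JordanHolderLattice.iso_symm hf1) (JordanHolderLattice.iso_trans hstep2 hf2)).linearEquiv⟩
  have := f.injective hfin
  have hval := congrArg Fin.val this
  simp only [Fin.natAdd, Fin.castAdd, Fin.castLE] at hval
  omega
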